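/- Let R = k[t]/(t^2) and A = k[x,y,z]/(x^2−y^2, x^2−z^2, xy, xz, yz) over a field k, with the injection R → A sending t to x^2. Then A is not a free R-module; indeed dim_k R = 2 does not divide dim_k A = 5, so A cannot be free, and since R is local, A is not projective over R. -/

import Mathlib

open Polynomial MvPolynomial

/-- `R = k[t]/(t²)`. -/
noncomputable abbrev ringR (k : Type) [Field k] : Type :=
  AdjoinRoot ((Polynomial.X : k[X]) ^ 2)

/-- The ideal `(x² - y², x² - z², xy, xz, yz)` of `k[x, y, z]`. -/
noncomputable def relIdeal (k : Type) [Field k] : Ideal (MvPolynomial (Fin 3) k) :=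
  Ideal.span {X 0 ^ 2 - X 1 ^ 2, X 0 ^ 2 - X 2 ^ 2, X 0 * X 1, X 0 * X 2, X 1 * X 2}

/-- `A = k[x,y,z]/(x² - y², x² - z², xy, xz, yz)`. -/
noncomputable abbrev ringA (k : Type) [Field k] : Type :=
  MvPolynomial (Fin 3) k ⧸ relIdeal k

lemma x_pow_four (k : Type) [Field k] :
    (Ideal.Quotient.mk (relIdeal k) (X 0)) ^ 4 = 0 := by
  rw [← map_pow, Ideal.Quotient.eq_zero_iff_mem]
  have h1 : (X 0 ^ 2 - X 1 ^ 2 : MvPolynomial (Fin 3) k) ∈ relIdeal k :=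
    Ideal.subset_span (by simp [Set.mem_insert_iff])
  have h2 : (X 0 * X 1 : MvPolynomial (Fin 3) k) ∈ relIdeal k :=
    Ideal.subset_span (by simp [Set.mem_insert_iff])
  have key : (X 0 : MvPolynomial (Fin 3) k) ^ 4 =
      X 0 ^ 2 * (X 0 ^ 2 - X 1 ^ 2) + (X 0 * X 1) * (X 0 * X 1) := by ring
  rw [key]
  exact Ideal.add_mem _ (Ideal.mul_mem_left _ _ h1) (Ideal.mul_mem_left _ _ h2)

/-- The injection `R → A` sending `t` to `x²`. -/
noncomputable def phi (k : Type) [Field k] : ringR k →ₐ[k] ringA k :=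
  AdjoinRoot.liftAlgHom _ (Algebra.ofId k (ringA k)) ((Ideal.Quotient.mk (relIdeal k) (X 0)) ^ 2) (by
    change Polynomial.aeval _ _ = 0
    rw [map_pow, Polynomial.aeval_X]
    rw [show ((Ideal.Quotient.mk (relIdeal k) (X 0)) ^ 2) ^ 2 =
      (Ideal.Quotient.mk (relIdeal k) (X 0)) ^ 4 from by ring]
    exact x_pow_four k)

set_option synthInstance.maxHeartbeats 1000000 in
/-- `A` as an `R`-module via `t ↦ x²`. -/
noncomputable instance moduleRA (k : Type) [Field k] : Module (ringR k) (ringA k) :=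
  Module.compHom _ (phi k).toRingHom

variable (k : Type) [Field k]

noncomputable def fco : MvPolynomial (Fin 3) k →ₗ[k] (Fin 5 → k) where
  toFun p := ![coeff 0 p, coeff (Finsupp.single 0 1) p, coeff (Finsupp.single 1 1) p,
    coeff (Finsupp.single 2 1) p,
    coeff (Finsupp.single 0 2) p + coeff (Finsupp.single 1 2) p + coeff (Finsupp.single 2 2) p]
  map_add' p q := by
    funext i; fin_cases i <;> simp [MvPolynomial.coeff_add] <;> ring
  map_smul' c p := by
    funext i; fin_cases i <;> simp [MvPolynomial.coeff_smul] <;> ring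

lemma prod_eq_monomial (i j : Fin 3) :
    (X i * X j : MvPolynomial (Fin 3) k) =
      MvPolynomial.monomial (Finsupp.single i 1 + Finsupp.single j 1) 1 := by
  rw [MvPolynomial.X, MvPolynomial.X, monomial_mul, one_mul]

lemma mixed_not_le (i j a : Fin 3) (hij : i ≠ j) (c : ℕ) :
    ¬ (Finsupp.single i 1 + Finsupp.single j 1 ≤ Finsupp.single a c) := by
  intro h
  rw [Finsupp.le_def] at h
  rcases (show i ≠ a ∨ j ≠ a by
    rcases eq_or_ne i a with h1 | h1
    · right; rw [← h1]; exact hij.symm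
    · left; exact h1) with hb | hb
  · have := h i
    simp [Finsupp.single_apply, (Ne.symm hb)] at this
    try split_ifs at this <;> omega
  · have := h j
    simp [Finsupp.single_apply, (Ne.symm hb), hij] at this

lemma sq_not_le (j a : Fin 3) (c : ℕ) (hc : c < 2) :
    ¬ (Finsupp.single j 2 ≤ Finsupp.single a c) := by
  intro h
  have := (Finsupp.le_def.mp h) j
  simp [Finsupp.single_apply] at this
  split_ifs at this <;> omega

lemma not_le_zero' (j : Fin 3) : ¬ (Finsupp.single j (2:ℕ) ≤ (0 : Fin 3 →₀ ℕ)) := by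
  intro h
  have := (Finsupp.le_def.mp h) j
  simp at this

lemma mixed_not_le_zero (i j : Fin 3) :
    ¬ (Finsupp.single i 1 + Finsupp.single j 1 ≤ (0 : Fin 3 →₀ ℕ)) := by
  intro h
  have := (Finsupp.le_def.mp h) i
  simp [Finsupp.single_apply] at this

lemma coeff_sq_mul (q : MvPolynomial (Fin 3) k) (j a : Fin 3) :
    coeff (Finsupp.single a 2) (q * X j ^ 2) =
      if j = a then coeff 0 q else 0 := by
  rw [MvPolynomial.X_pow_eq_monomial, coeff_mul_monomial']
  rcases eq_or_ne j a with h | h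
  · subst h; simp
  · rw [if_neg, if_neg h]
    intro hle
    have := (Finsupp.le_def.mp hle) j
    simp [Finsupp.single_apply, Ne.symm h] at this

lemma fco_mul_sq (q : MvPolynomial (Fin 3) k) (j : Fin 3) :
    fco k (q * X j ^ 2) = ![0, 0, 0, 0, coeff 0 q] := by
  funext m
  fin_cases m
  · show coeff 0 (q * X j ^ 2) = 0
    rw [MvPolynomial.X_pow_eq_monomial, coeff_mul_monomial', if_neg (not_le_zero' j)]
  · show coeff (Finsupp.single 0 1) (q * X j ^ 2) = 0
    rw [MvPolynomial.X_pow_eq_monomial, coeff_mul_monomial', if_neg (sq_not_le j 0 1 one_lt_two)]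
  · show coeff (Finsupp.single 1 1) (q * X j ^ 2) = 0
    rw [MvPolynomial.X_pow_eq_monomial, coeff_mul_monomial', if_neg (sq_not_le j 1 1 one_lt_two)]
  · show coeff (Finsupp.single 2 1) (q * X j ^ 2) = 0
    rw [MvPolynomial.X_pow_eq_monomial, coeff_mul_monomial', if_neg (sq_not_le j 2 1 one_lt_two)]
  · show coeff (Finsupp.single 0 2) (q * X j ^ 2) + coeff (Finsupp.single 1 2) (q * X j ^ 2)
        + coeff (Finsupp.single 2 2) (q * X j ^ 2) = coeff 0 q
    rw [coeff_sq_mul, coeff_sq_mul, coeff_sq_mul]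
    fin_cases j <;> simp

lemma fco_mul_mixed (q : MvPolynomial (Fin 3) k) (i j : Fin 3) (hij : i ≠ j) :
    fco k (q * (X i * X j)) = 0 := by
  funext m
  rw [prod_eq_monomial]
  fin_cases m
  · show coeff 0 (q * MvPolynomial.monomial _ 1) = 0
    rw [coeff_mul_monomial', if_neg (mixed_not_le_zero _ _)]
  · show coeff (Finsupp.single 0 1) (q * MvPolynomial.monomial _ 1) = 0
    rw [coeff_mul_monomial', if_neg (mixed_not_le _ _ _ hij _)]
  · show coeff (Finsupp.single 1 1) (q * MvPolynomial.monomial _ 1) = 0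
    rw [coeff_mul_monomial', if_neg (mixed_not_le _ _ _ hij _)]
  · show coeff (Finsupp.single 2 1) (q * MvPolynomial.monomial _ 1) = 0
    rw [coeff_mul_monomial', if_neg (mixed_not_le _ _ _ hij _)]
  · show coeff (Finsupp.single 0 2) (q * MvPolynomial.monomial _ 1) + coeff (Finsupp.single 1 2) (q * MvPolynomial.monomial _ 1)
        + coeff (Finsupp.single 2 2) (q * MvPolynomial.monomial _ 1) = 0
    rw [coeff_mul_monomial', if_neg (mixed_not_le _ _ _ hij _),
        coeff_mul_monomial', if_neg (mixed_not_le _ _ _ hij _),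
        coeff_mul_monomial', if_neg (mixed_not_le _ _ _ hij _)]
    ring

lemma fco_vanish (p : MvPolynomial (Fin 3) k) (hp : p ∈ relIdeal k) : fco k p = 0 := by
  have key : ∀ (x : MvPolynomial (Fin 3) k), x ∈ relIdeal k → ∀ q, fco k (q * x) = 0 := by
    intro x hx
    refine Submodule.span_induction ?_ ?_ ?_ ?_ hx
    · intro g hg q
      simp only [Set.mem_insert_iff, Set.mem_singleton_iff] at hg
      rcases hg with rfl | rfl | rfl | rfl | rfl
      · rw [mul_sub, map_sub, fco_mul_sq, fco_mul_sq, sub_self]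
      · rw [mul_sub, map_sub, fco_mul_sq, fco_mul_sq, sub_self]
      · exact fco_mul_mixed k q 0 1 (by decide)
      · exact fco_mul_mixed k q 0 2 (by decide)
      · exact fco_mul_mixed k q 1 2 (by decide)
    · intro q; rw [mul_zero, map_zero]
    · intro a b _ _ ha hb q; rw [mul_add, map_add, ha, hb, add_zero]
    · intro r a _ ha q
      rw [smul_eq_mul, show q * (r * a) = (q * r) * a by ring, ha]
  simpa using key p hp 1

namespace Aux17

variable (k : Type) [Field k]

local notation "mkA" => Ideal.Quotient.mk (relIdeal k)

/-- the five basis vectors of A -/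
noncomputable def v : Fin 5 → ringA k :=
  ![1, mkA (X 0), mkA (X 1), mkA (X 2), mkA (X 0 ^ 2)]

/-- their polynomial lifts -/
noncomputable def w : Fin 5 → MvPolynomial (Fin 3) k :=
  ![1, X 0, X 1, X 2, X 0 ^ 2]

lemma mk_w (i : Fin 5) : mkA (w k i) = v k i := by
  fin_cases i <;> simp [v, w]

-- membership helpers
lemma mem_gen (g : MvPolynomial (Fin 3) k)
    (hg : g ∈ ({X 0 ^ 2 - X 1 ^ 2, X 0 ^ 2 - X 2 ^ 2, X 0 * X 1, X 0 * X 2, X 1 * X 2} :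
      Set (MvPolynomial (Fin 3) k))) : g ∈ relIdeal k := Ideal.subset_span hg

lemma mkA_XY : mkA (X 0 * X 1) = 0 :=
  Ideal.Quotient.eq_zero_iff_mem.2 (mem_gen k _ (by simp))
lemma mkA_XZ : mkA (X 0 * X 2) = 0 :=
  Ideal.Quotient.eq_zero_iff_mem.2 (mem_gen k _ (by simp))
lemma mkA_YZ : mkA (X 1 * X 2) = 0 :=
  Ideal.Quotient.eq_zero_iff_mem.2 (mem_gen k _ (by simp))
lemma mkA_Ysq : mkA (X 1 ^ 2) = mkA (X 0 ^ 2) := by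
  rw [Ideal.Quotient.eq]
  have h : (X 0 ^ 2 - X 1 ^ 2 : MvPolynomial (Fin 3) k) ∈ relIdeal k := mem_gen k _ (by simp)
  simpa using neg_mem h
lemma mkA_Zsq : mkA (X 2 ^ 2) = mkA (X 0 ^ 2) := by
  rw [Ideal.Quotient.eq]
  have h : (X 0 ^ 2 - X 2 ^ 2 : MvPolynomial (Fin 3) k) ∈ relIdeal k := mem_gen k _ (by simp)
  simpa using neg_mem h

lemma mkA_Xcube : mkA (X 0 ^ 3) = 0 := by
  rw [Ideal.Quotient.eq_zero_iff_mem,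
    show (X 0 ^ 3 : MvPolynomial (Fin 3) k) = X 0 * (X 0 ^ 2 - X 1 ^ 2) + X 1 * (X 0 * X 1) by ring]
  exact Ideal.add_mem _ (Ideal.mul_mem_left _ _ (mem_gen k _ (by simp)))
    (Ideal.mul_mem_left _ _ (mem_gen k _ (by simp)))

lemma mkA_XsqY : mkA (X 0 ^ 2 * X 1) = 0 := by
  rw [Ideal.Quotient.eq_zero_iff_mem,
    show (X 0 ^ 2 * X 1 : MvPolynomial (Fin 3) k) = X 0 * (X 0 * X 1) by ring]
  exact Ideal.mul_mem_left _ _ (mem_gen k _ (by simp))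

lemma mkA_XsqZ : mkA (X 0 ^ 2 * X 2) = 0 := by
  rw [Ideal.Quotient.eq_zero_iff_mem,
    show (X 0 ^ 2 * X 2 : MvPolynomial (Fin 3) k) = X 0 * (X 0 * X 2) by ring]
  exact Ideal.mul_mem_left _ _ (mem_gen k _ (by simp))

lemma mkA_Xfour : mkA (X 0 ^ 4) = 0 := by
  have := x_pow_four k
  rwa [← map_pow] at this

set_option maxHeartbeats 1000000 in
lemma v_mul_v (i j : Fin 5) : v k i * v k j ∈ Submodule.span k (Set.range (v k)) := by
  set p := Submodule.span k (Set.range (v k)) with hp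
  have mem : ∀ m : Fin 5, v k m ∈ p := fun m => Submodule.subset_span ⟨m, rfl⟩
  have z : (0 : ringA k) ∈ p := Submodule.zero_mem _
  clear_value p
  fin_cases i <;> fin_cases j <;>
    simp only [v, Fin.zero_eta, Fin.mk_one, Fin.reduceFinMk, Fin.isValue,
      Matrix.cons_val_zero, Matrix.cons_val_one, Matrix.cons_val_two, Matrix.cons_val_three,
      Matrix.cons_val_four, Matrix.tail_cons, Matrix.head_cons, Nat.succ_eq_add_one,
      Nat.reduceAdd, one_mul, mul_one, ← map_mul] <;>
    first
    | exact mem 0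
    | exact mem 1
    | exact mem 2
    | exact mem 3
    | exact mem 4
    | (rw [show (X 0 * X 0 : MvPolynomial (Fin 3) k) = X 0 ^ 2 by ring]; exact mem 4)
    | (rw [mkA_XY]; exact z)
    | (rw [mkA_XZ]; exact z)
    | (rw [mkA_YZ]; exact z)
    | (rw [show (X 0 * X 0 ^ 2 : MvPolynomial (Fin 3) k) = X 0 ^ 3 by ring, mkA_Xcube]; exact z)
    | (rw [show (X 1 * X 0 : MvPolynomial (Fin 3) k) = X 0 * X 1 by ring, mkA_XY]; exact z)
    | (rw [show (X 1 * X 1 : MvPolynomial (Fin 3) k) = X 1 ^ 2 by ring, mkA_Ysq]; exact mem 4)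
    | (rw [show (X 1 * X 0 ^ 2 : MvPolynomial (Fin 3) k) = X 0 ^ 2 * X 1 by ring, mkA_XsqY]; exact z)
    | (rw [show (X 2 * X 0 : MvPolynomial (Fin 3) k) = X 0 * X 2 by ring, mkA_XZ]; exact z)
    | (rw [show (X 2 * X 1 : MvPolynomial (Fin 3) k) = X 1 * X 2 by ring, mkA_YZ]; exact z)
    | (rw [show (X 2 * X 2 : MvPolynomial (Fin 3) k) = X 2 ^ 2 by ring, mkA_Zsq]; exact mem 4)
    | (rw [show (X 2 * X 0 ^ 2 : MvPolynomial (Fin 3) k) = X 0 ^ 2 * X 2 by ring, mkA_XsqZ]; exact z)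
    | (rw [show (X 0 ^ 2 * X 0 : MvPolynomial (Fin 3) k) = X 0 ^ 3 by ring, mkA_Xcube]; exact z)
    | (rw [mkA_XsqY]; exact z)
    | (rw [mkA_XsqZ]; exact z)
    | (rw [show (X 0 ^ 2 * X 0 ^ 2 : MvPolynomial (Fin 3) k) = X 0 ^ 4 by ring, mkA_Xfour]; exact z)

lemma mul_v_mem (a : ringA k) (ha : a ∈ Submodule.span k (Set.range (v k))) (j : Fin 5) :
    a * v k j ∈ Submodule.span k (Set.range (v k)) := by
  refine Submodule.span_induction (fun x hx => ?_) ?_ ?_ ?_ ha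
  · obtain ⟨i, rfl⟩ := hx; exact v_mul_v k i j
  · rw [zero_mul]; exact Submodule.zero_mem _
  · intro x y _ _ hx hy; rw [add_mul]; exact Submodule.add_mem _ hx hy
  · intro c x _ hx; rw [smul_mul_assoc]; exact Submodule.smul_mem _ _ hx

lemma v_one : v k 0 = 1 := rfl

lemma span_v_top : Submodule.span k (Set.range (v k)) = ⊤ := by
  rw [eq_top_iff]
  rintro a -
  obtain ⟨q, rfl⟩ := Ideal.Quotient.mk_surjective a
  induction q using MvPolynomial.induction_on with
  | C c =>
      have : mkA (MvPolynomial.C c) = c • v k 0 := by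
        rw [v_one, ← Algebra.algebraMap_eq_smul_one, ← MvPolynomial.algebraMap_eq]
        exact ((Ideal.Quotient.mkₐ k (relIdeal k)).commutes c).symm
      rw [this]
      exact Submodule.smul_mem _ _ (Submodule.subset_span ⟨0, rfl⟩)
  | add p q hp hq => rw [RingHom.map_add]; exact Submodule.add_mem _ hp hq
  | mul_X p i hp =>
      rw [RingHom.map_mul]
      have h : mkA (X i) = v k ⟨i.val + 1, by omega⟩ := by fin_cases i <;> rfl
      rw [h]
      exact mul_v_mem k _ hp _

lemma fco_w (m : Fin 5) : fco k (w k m) = fun n => if n = m then 1 else 0 := by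
  fin_cases m <;> funext n <;> fin_cases n <;>
    simp [fco, w, MvPolynomial.coeff_X', MvPolynomial.coeff_X_pow,
      Finsupp.single_eq_single_iff, Finsupp.single_eq_zero, MvPolynomial.coeff_zero,
      MvPolynomial.coeff_one, eq_comm]

lemma mkA_smul (c : k) (q : MvPolynomial (Fin 3) k) : mkA (c • q) = c • mkA q := by
  exact map_smul ((Ideal.Quotient.mkₐ k (relIdeal k)).toLinearMap) c q

lemma v_li : LinearIndependent k (v k) := by
  rw [Fintype.linearIndependent_iff]
  intro c hc i
  have key : mkA (∑ m, c m • w k m) = 0 := by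
    rw [map_sum]
    calc ∑ m, mkA (c m • w k m) = ∑ m, c m • v k m := by
          refine Finset.sum_congr rfl fun m _ => ?_
          rw [mkA_smul, mk_w]
      _ = 0 := hc
  have hmem : (∑ m, c m • w k m) ∈ relIdeal k := Ideal.Quotient.eq_zero_iff_mem.1 key
  have hf := fco_vanish k _ hmem
  rw [map_sum] at hf
  have := congrFun hf i
  simp only [map_smul, Finset.sum_apply, Pi.smul_apply, fco_w, smul_eq_mul, Pi.zero_apply] at this
  simpa using this

noncomputable def basisA : Module.Basis (Fin 5) k (ringA k) :=
  Module.Basis.mk (v_li k) (by rw [span_v_top])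

lemma finrank_A : Module.finrank k (ringA k) = 5 := by
  rw [Module.finrank_eq_card_basis (basisA k), Fintype.card_fin]

end Aux17
namespace Aux17

noncomputable def pbR : PowerBasis k (ringR k) :=
  AdjoinRoot.powerBasis' (Polynomial.monic_X_pow 2)

lemma finrank_R : Module.finrank k (ringR k) = 2 := by
  rw [(pbR k).finrank]
  simp [pbR, AdjoinRoot.powerBasis']

instance : Nontrivial (ringR k) :=
  AdjoinRoot.nontrivial _ (by rw [Polynomial.degree_X_pow]; exact (by decide))

instance : Module.Free k (ringR k) := Module.Free.of_basis (pbR k).basis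
instance : Module.Finite k (ringR k) := Module.Finite.of_basis (pbR k).basis
instance : Module.Finite k (ringA k) := Module.Finite.of_basis (basisA k)

instance : IsScalarTower k (ringR k) (ringA k) :=
  ⟨fun c r a => by
    show phi k (c • r) * a = c • (phi k r * a)
    rw [map_smul, smul_mul_assoc]⟩

/-- evaluation at 0 -/
noncomputable def eps : ringR k →ₐ[k] k :=
  AdjoinRoot.liftAlgHom _ (Algebra.ofId k k) 0 (by simp)

lemma sq_zero_of_eps_zero (b : ringR k) (hb : eps k b = 0) : b * b = 0 := by
  obtain ⟨P, rfl⟩ := AdjoinRoot.mk_surjective b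
  have h0 : P.coeff 0 = 0 := by
    have h1 : (Polynomial.aeval (0 : k)) P = 0 := by
      rw [Polynomial.aeval_def]
      exact hb
    rw [Polynomial.coeff_zero_eq_eval_zero]
    simpa [Polynomial.aeval_def, Polynomial.eval₂_eq_eval_map] using h1
  obtain ⟨Q, rfl⟩ := Polynomial.X_dvd_iff.2 h0
  rw [← map_mul, show (Polynomial.X * Q) * (Polynomial.X * Q) = Polynomial.X ^ 2 * (Q * Q) by
    ring, map_mul, AdjoinRoot.mk_self, zero_mul]

lemma isUnit_of_eps_ne (b : ringR k) (hb : eps k b ≠ 0) : IsUnit b := by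
  set c : ringR k := algebraMap k (ringR k) (eps k b) with hc
  have hcu : IsUnit c := (isUnit_iff_ne_zero.2 hb).map (algebraMap k (ringR k))
  have hnil : IsNilpotent (b - c) := by
    refine ⟨2, ?_⟩
    rw [pow_two]
    exact sq_zero_of_eps_zero k _ (by rw [map_sub, hc, AlgHom.commutes, Algebra.algebraMap_self_apply, sub_self])
  have := hnil.isUnit_add_right_of_commute hcu (Commute.all _ _)
  simpa using this

lemma isLocal_R : IsLocalRing (ringR k) := by
  apply IsLocalRing.of_isUnit_or_isUnit_one_sub_self
  intro a
  rcases eq_or_ne (eps k a) 0 with h | h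
  · right
    refine isUnit_of_eps_ne k _ ?_
    rw [map_sub, map_one, h, sub_zero]
    exact one_ne_zero
  · exact Or.inl (isUnit_of_eps_ne k _ h)

end Aux17

/-- with `R = k[t]/(t²)` and
`A = k[x,y,z]/(x²-y², x²-z², xy, xz, yz)` viewed as an `R`-module via `t ↦ x²`,
one has `dim_k R = 2`, `dim_k A = 5`, and `A` is neither free nor projective
as an `R`-module. -/
theorem ringA_not_free_not_projective (k : Type) [Field k] :
    Module.finrank k (ringR k) = 2 ∧ Module.finrank k (ringA k) = 5 ∧
      ¬ Module.Free (ringR k) (ringA k) ∧ ¬ Module.Projective (ringR k) (ringA k) := by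
  have hR := Aux17.finrank_R k
  have hA := Aux17.finrank_A k
  have hnotfree : ¬ Module.Free (ringR k) (ringA k) := by
    intro hfree
    have := Module.finrank_mul_finrank k (ringR k) (ringA k)
    rw [hR, hA] at this
    omega
  refine ⟨hR, hA, hnotfree, ?_⟩
  intro hproj
  haveI := Aux17.isLocal_R k
  haveI : Module.Finite (ringR k) (ringA k) :=
    Module.Finite.of_restrictScalars_finite k (ringR k) (ringA k)
  haveI : Module.FinitePresentation (ringR k) (ringA k) :=
    Module.finitePresentation_of_projective _ _
  haveI : Module.Flat (ringR k) (ringA k) := Module.Flat.of_projective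
  exact hnotfree (Module.free_of_flat_of_isLocalRing)
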